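/- If ρ is a two-qubit density matrix such that for every 4×4 unitary matrix U the transformed matrix U ρ U† satisfies the zero-discord block condition, then ρ = (1/4)·I₄. (The only two-qubit state whose quantum discord vanishes absolutely, i.e. after every global unitary transformation, is the maximally mixed state.) -/

import Mathlib

open Matrix
open scoped Kronecker ComplexOrder

def IsDensityMatrix {n : Type*} [Fintype n] [DecidableEq n] (ρ : Matrix n n ℂ) : Prop :=
  ρ.PosSemidef ∧ ρ.trace = 1

def qblock (M : Matrix (Fin 2 × Fin 2) (Fin 2 × Fin 2) ℂ) (a b : Fin 2) :
    Matrix (Fin 2) (Fin 2) ℂ :=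
  fun e f => M (a, e) (b, f)

def ZeroDiscordBlockCondition (M : Matrix (Fin 2 × Fin 2) (Fin 2 × Fin 2) ℂ) : Prop :=
  (∀ a b : Fin 2, qblock M a b * (qblock M a b)ᴴ = (qblock M a b)ᴴ * qblock M a b) ∧
  (∀ a b a' b' : Fin 2, qblock M a b * qblock M a' b' = qblock M a' b' * qblock M a b)

noncomputable def rotM (p q : Fin 2 × Fin 2) : Matrix (Fin 2 × Fin 2) (Fin 2 × Fin 2) ℂ :=
  fun i j =>
    if i = p ∧ j = p then 3/5 else if i = p ∧ j = q then 4/5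
    else if i = q ∧ j = p then -(4/5) else if i = q ∧ j = q then 3/5
    else if i = j then (1:ℂ) else 0

lemma rot_mem1 : rotM (0,0) (1,1) ∈ Matrix.unitaryGroup (Fin 2 × Fin 2) ℂ := by
  rw [Matrix.mem_unitaryGroup_iff]
  ext i j
  fin_cases i <;> fin_cases j <;>
    simp [rotM, Matrix.mul_apply, Fintype.sum_prod_type, Fin.sum_univ_two, Matrix.one_apply,
      Matrix.star_apply, Prod.ext_iff] <;> norm_num [Complex.conj_ofNat]

lemma rot_mem2 : rotM (0,1) (1,0) ∈ Matrix.unitaryGroup (Fin 2 × Fin 2) ℂ := by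
  rw [Matrix.mem_unitaryGroup_iff]
  ext i j
  fin_cases i <;> fin_cases j <;>
    simp [rotM, Matrix.mul_apply, Fintype.sum_prod_type, Fin.sum_univ_two, Matrix.one_apply,
      Matrix.star_apply, Prod.ext_iff] <;> norm_num [Complex.conj_ofNat]

lemma rot_mem3 : rotM (0,0) (0,1) ∈ Matrix.unitaryGroup (Fin 2 × Fin 2) ℂ := by
  rw [Matrix.mem_unitaryGroup_iff]
  ext i j
  fin_cases i <;> fin_cases j <;>
    simp [rotM, Matrix.mul_apply, Fintype.sum_prod_type, Fin.sum_univ_two, Matrix.one_apply,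
      Matrix.star_apply, Prod.ext_iff] <;> norm_num [Complex.conj_ofNat]

theorem absolute_zero_discord (ρ : Matrix (Fin 2 × Fin 2) (Fin 2 × Fin 2) ℂ)
    (hρ : IsDensityMatrix ρ)
    (h : ∀ U ∈ Matrix.unitaryGroup (Fin 2 × Fin 2) ℂ,
      ZeroDiscordBlockCondition (U * ρ * Uᴴ)) :
    ρ = (1 / 4 : ℂ) • (1 : Matrix (Fin 2 × Fin 2) (Fin 2 × Fin 2) ℂ) := by
  obtain ⟨hpsd, htr⟩ := hρ
  have hherm : ρ.IsHermitian := hpsd.1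
  set V : Matrix (Fin 2 × Fin 2) (Fin 2 × Fin 2) ℂ :=
    (Matrix.IsHermitian.eigenvectorUnitary hherm : Matrix (Fin 2 × Fin 2) (Fin 2 × Fin 2) ℂ)
    with hVdef
  set d : (Fin 2 × Fin 2) → ℝ := hherm.eigenvalues with hddef
  set D : Matrix (Fin 2 × Fin 2) (Fin 2 × Fin 2) ℂ :=
    Matrix.diagonal (fun i => (d i : ℂ)) with hDdef
  have hspec : ρ = V * D * Vᴴ := by
    rw [← Matrix.star_eq_conjTranspose]
    exact (hherm.spectral_theorem.trans (Unitary.conjStarAlgAut_apply _ _))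
  have hVmem : V ∈ Matrix.unitaryGroup (Fin 2 × Fin 2) ℂ := SetLike.coe_mem _
  have hVV : Vᴴ * V = 1 := by
    rw [← Matrix.star_eq_conjTranspose]; exact Matrix.mem_unitaryGroup_iff'.mp hVmem
  have hVV' : V * Vᴴ = 1 := by
    rw [← Matrix.star_eq_conjTranspose]; exact Matrix.mem_unitaryGroup_iff.mp hVmem
  have key : ∀ W ∈ Matrix.unitaryGroup (Fin 2 × Fin 2) ℂ,
      ZeroDiscordBlockCondition (W * D * Wᴴ) := by
    intro W hW
    have hVHmem : Vᴴ ∈ Matrix.unitaryGroup (Fin 2 × Fin 2) ℂ := by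
      rw [← Matrix.star_eq_conjTranspose]; exact Unitary.star_mem hVmem
    have hU := h (W * Vᴴ) (mul_mem hW hVHmem)
    have heq : (W * Vᴴ) * ρ * (W * Vᴴ)ᴴ = W * D * Wᴴ := by
      rw [hspec, Matrix.conjTranspose_mul, Matrix.conjTranspose_conjTranspose]
      simp only [Matrix.mul_assoc]
      rw [← Matrix.mul_assoc Vᴴ V, hVV, Matrix.one_mul, ← Matrix.mul_assoc Vᴴ V, hVV,
        Matrix.one_mul]
    rwa [heq] at hU
  -- Rotation 1 : forces d(0,0) = d(1,1)
  have k1 := (key _ rot_mem1).1 0 1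
  have e1c : (d (0,0) : ℂ) = (d (1,1) : ℂ) := by
    have e : _ = _ := congrFun (congrFun k1 0) 0
    simp [qblock, rotM, Matrix.mul_apply, Matrix.conjTranspose_apply, Matrix.diagonal_apply,
      Fintype.sum_prod_type, Fin.sum_univ_two, Prod.ext_iff, Complex.conj_ofNat,
      Complex.conj_ofReal, _root_.map_mul, _root_.map_sub, hDdef] at e
    have h00 : ((0,0) : Fin 2 × Fin 2) = 0 := rfl
    have h11 : ((1,1) : Fin 2 × Fin 2) = 1 := rfl
    rw [h00, h11]
    linear_combination (-25/12 : ℂ) * e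
  -- Rotation 2 : forces d(0,1) = d(1,0)
  have k2 := (key _ rot_mem2).1 0 1
  have e2c : (d (0,1) : ℂ) = (d (1,0) : ℂ) := by
    have e : _ = _ := congrFun (congrFun k2 1) 1
    simp [qblock, rotM, Matrix.mul_apply, Matrix.conjTranspose_apply, Matrix.diagonal_apply,
      Fintype.sum_prod_type, Fin.sum_univ_two, Prod.ext_iff, Complex.conj_ofNat,
      Complex.conj_ofReal, _root_.map_mul, _root_.map_sub, hDdef] at e
    linear_combination (-25/12 : ℂ) * e
  -- Rotation 3 : forces (d(0,0)-d(0,1)) * (d(1,0)-d(1,1)) = 0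
  have k3 := (key _ rot_mem3).2 0 0 1 1
  have e3c : ((d (0,1) : ℂ) - d (0,0)) * ((d (1,1) : ℂ) - d (1,0)) = 0 := by
    have e : _ = _ := congrFun (congrFun k3 0) 1
    simp [qblock, rotM, Matrix.mul_apply, Matrix.conjTranspose_apply, Matrix.diagonal_apply,
      Fintype.sum_prod_type, Fin.sum_univ_two, Prod.ext_iff, Complex.conj_ofNat,
      Complex.conj_ofReal, _root_.map_mul, _root_.map_sub, hDdef] at e
    linear_combination (25/12 : ℂ) * e
  have e4c : (d (0,0) : ℂ) = (d (0,1) : ℂ) := by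
    rw [e1c, ← e2c] at e3c
    have h2 : -(((d (0,1) : ℂ) - d (1,1)) * ((d (0,1) : ℂ) - d (1,1))) = 0 := by
      linear_combination e3c
    have h3 : (d (0,1) : ℂ) - d (1,1) = 0 := mul_self_eq_zero.mp (neg_eq_zero.mp h2)
    rw [e1c]
    exact (sub_eq_zero.mp h3).symm
  have htrD : (d (0,0) : ℂ) + d (0,1) + d (1,0) + d (1,1) = 1 := by
    rw [hspec] at htr
    rw [Matrix.trace_mul_comm, ← Matrix.mul_assoc, hVV, Matrix.one_mul] at htr
    rw [hDdef, Matrix.trace_diagonal, Fintype.sum_prod_type] at htr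
    simpa [Fin.sum_univ_two, add_assoc] using htr
  have hd00 : (d (0,0) : ℂ) = 1/4 := by
    linear_combination (1/4 : ℂ) * htrD + (1/2 : ℂ) * e4c + (1/4 : ℂ) * e2c + (1/4 : ℂ) * e1c
  have hall : ∀ i, (d i : ℂ) = 1/4 := by
    intro i
    fin_cases i
    · exact hd00
    · exact e4c.symm.trans hd00
    · exact e2c.symm.trans (e4c.symm.trans hd00)
    · exact e1c.symm.trans hd00
  have hD : D = (1/4 : ℂ) • (1 : Matrix (Fin 2 × Fin 2) (Fin 2 × Fin 2) ℂ) := by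
    rw [hDdef]
    ext i j
    by_cases hij : i = j <;>
      simp [Matrix.diagonal_apply, Matrix.one_apply, hij, hall]
  rw [hspec, hD, Matrix.mul_smul, Matrix.mul_one, Matrix.smul_mul, hVV']
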